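/- arXiv:2209.10142 — 7 statements merged into one kernel-verified Lean document; each statement's English description precedes it below -/
import Mathlib

section
/- Let n ≥ 4 be an integer, let r₁, r₂, r₃ be nonnegative integers with r₁ + r₂ + r₃ = n − 1, and let α₁ ∈ (−1,1), α₂, α₃ ∈ [0,1) satisfy α₁ + α₂ + α₃ = 1, r₁ + α₁ ≥ r₂ + α₂ and r₁ + α₁ ≥ r₃ + α₃. Then L_n((r₁+α₁)/n, (r₂+α₂)/n, (r₃+α₃)/n) ≤ L_n((n−1+α₁)/n, α₂/n, α₃/n) + 2^{2n/3}·(10 + 2·ln n), where 2^{2n/3} denotes the real power. -/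
open Finset
noncomputable def bb (x : ℝ) (j : ℕ) : ℝ := (∏ k ∈ Finset.range j, (x - k)) / j.factorial

lemma bb_zero (x : ℝ) : bb x 0 = 1 := by simp [bb]

lemma bb_succ (x : ℝ) (j : ℕ) : bb x (j+1) = bb x j * (x - j) / (j+1) := by
  rw [bb, bb, Finset.prod_range_succ, Nat.factorial_succ, div_mul_eq_mul_div, div_div]
  push_cast
  rw [mul_comm ((j:ℝ)+1)]

lemma bb_nat (M j : ℕ) : bb (M : ℝ) j = (M.choose j : ℝ) := by
  induction j with
  | zero => simp [bb_zero]
  | succ j ih =>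
    rw [bb_succ, ih]
    rcases lt_or_ge j M with h | h
    · have h2 : (M.choose (j+1) : ℝ) * (j+1) = (M.choose j : ℝ) * ((M:ℝ) - j) := by
        have := Nat.choose_succ_right_eq M j
        have hc : ((M.choose (j+1) * (j+1) : ℕ) : ℝ) = ((M.choose j * (M - j) : ℕ) : ℝ) := by
          exact_mod_cast congrArg (Nat.cast (R := ℝ)) this
        push_cast [Nat.cast_sub h.le] at hc
        linarith
      field_simp
      linarith
    · rcases eq_or_lt_of_le h with rfl | h'
      · simp
      · rw [Nat.choose_eq_zero_of_lt h', Nat.choose_eq_zero_of_lt (by omega)]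
        simp

lemma bb_nonneg {x : ℝ} (hx : 0 ≤ x) {j : ℕ} (hj : j ≤ Nat.floor x + 1) : 0 ≤ bb x j := by
  apply div_nonneg _ (by positivity)
  apply Finset.prod_nonneg
  intro k hk
  simp only [Finset.mem_range] at hk
  have h1 : k ≤ Nat.floor x := by omega
  have h2 : (k : ℝ) ≤ Nat.floor x := by exact_mod_cast h1
  have := Nat.floor_le hx
  linarith

lemma aux_prod (t : ℕ) : ∏ k ∈ Finset.range t, ((t:ℝ) - k) = t.factorial := by
  induction t with
  | zero => simp
  | succ t ih =>
    rw [Finset.prod_range_succ']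
    push_cast
    rw [Finset.prod_congr rfl (fun k hk => by ring : ∀ k ∈ Finset.range t, ((t:ℝ)+1 - ((k:ℝ)+1)) = (t:ℝ) - k), ih]
    push_cast [Nat.factorial_succ]
    ring

lemma abs_factor_le {x : ℝ} (hx : -1 ≤ x) {k : ℕ} (hk : k ≤ Nat.floor x) :
    |x - k| ≤ ((Nat.floor x : ℝ) + 1) - k := by
  set m := Nat.floor x with hm
  have hkm : (k:ℝ) ≤ m := by exact_mod_cast hk
  rcases le_or_gt 0 x with h | h
  · have h1 : (m:ℝ) ≤ x := Nat.floor_le h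
    have h2 : x < m + 1 := Nat.lt_floor_add_one x
    rw [abs_le]; constructor <;> linarith
  · have h0 : m = 0 := by rw [hm, Nat.floor_of_nonpos h.le]
    have hk0 : k = 0 := by omega
    subst hk0
    rw [h0] at *
    push_cast
    rw [abs_le]; constructor <;> [linarith; linarith]

lemma prod_abs_le {x : ℝ} (hx : -1 ≤ x) :
    ∀ j, Nat.floor x + 1 ≤ j → |∏ k ∈ Finset.range j, (x - k)| ≤ j.factorial := by
  set m := Nat.floor x with hm
  have hxlt : x < m + 1 := by
    rcases le_or_gt 0 x with h | h
    · exact_mod_cast Nat.lt_floor_add_one x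
    · have h0 : m = 0 := by rw [hm, Nat.floor_of_nonpos h.le]
      rw [h0]; push_cast; linarith
  intro j hj
  induction j, hj using Nat.le_induction with
  | base =>
    rw [abs_prod]
    calc ∏ k ∈ Finset.range (m+1), |x - k| ≤ ∏ k ∈ Finset.range (m+1), (((m:ℝ)+1) - k) := by
          apply Finset.prod_le_prod (fun k _ => abs_nonneg _)
          intro k hk
          simp only [Finset.mem_range] at hk
          exact abs_factor_le hx (by omega)
      _ = ((m+1).factorial : ℝ) := by
          have := aux_prod (m+1)
          push_cast at this
          exact this
  | succ j hj ih =>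
    rw [Finset.prod_range_succ, abs_mul, Nat.factorial_succ]
    push_cast
    have hmj : (m:ℝ) + 1 ≤ j := by exact_mod_cast hj
    have h2 : |x - j| ≤ (j:ℝ) + 1 := by
      rw [abs_le]; constructor <;> linarith
    calc |∏ k ∈ Finset.range j, (x - k)| * |x - j| ≤ (j.factorial:ℝ) * ((j:ℝ)+1) :=
          mul_le_mul ih h2 (abs_nonneg _) (by positivity)
      _ = ((j:ℝ)+1) * j.factorial := by ring

lemma bb_abs_le_one {x : ℝ} (hx : -1 ≤ x) {j : ℕ} (hj : Nat.floor x < j) : |bb x j| ≤ 1 := by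
  rw [bb, abs_div, abs_of_nonneg (by positivity : (0:ℝ) ≤ (j.factorial:ℝ))]
  rw [div_le_one (by positivity)]
  exact prod_abs_le hx j (by omega)

lemma bb_abs_anti {x : ℝ} (hx : -1 ≤ x) {a b : ℕ} (hxa : x ≤ a) (hab : a ≤ b) :
    |bb x b| ≤ |bb x a| := by
  induction b, hab using Nat.le_induction with
  | base => exact le_rfl
  | succ b hb ih =>
    rw [bb_succ, abs_div, abs_mul]
    have hxb : x ≤ b := le_trans hxa (by exact_mod_cast hb)
    have h2 : |x - b| ≤ (b:ℝ) + 1 := by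
      rw [abs_le]; constructor <;> nlinarith [(Nat.cast_nonneg b : (0:ℝ) ≤ b)]
    rw [abs_of_pos (by positivity : (0:ℝ) < (b:ℝ)+1), div_le_iff₀ (by positivity)]
    calc |bb x b| * |x - b| ≤ |bb x a| * ((b:ℝ)+1) :=
          mul_le_mul ih h2 (abs_nonneg _) (abs_nonneg _)

lemma bb_abs_small {x : ℝ} (hx : 0 ≤ x) {j : ℕ} (hj : Nat.floor x + 2 ≤ j) :
    |bb x j| ≤ 1 / (Nat.floor x + 2) := by
  set m := Nat.floor x with hm
  have hfl : (m:ℝ) ≤ x := Nat.floor_le hx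
  have hfu : x < m + 1 := Nat.lt_floor_add_one x
  have h1 : |bb x j| ≤ |bb x (m+2)| := by
    apply bb_abs_anti (by linarith) _ hj
    push_cast; linarith
  have h2 : bb x (m+2) = bb x (m+1) * (x - ((m:ℝ)+1)) / ((m:ℝ)+2) := by
    have e : m + 2 = (m+1) + 1 := by omega
    rw [e, bb_succ]
    push_cast
    ring
  have h3 : |bb x (m+1)| ≤ 1 := bb_abs_le_one (by linarith) (by omega)
  have h4 : |x - ((m:ℝ)+1)| ≤ 1 := by
    rw [abs_le]; constructor <;> linarith
  calc |bb x j| ≤ |bb x (m+2)| := h1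
    _ = |bb x (m+1)| * |x - ((m:ℝ)+1)| / ((m:ℝ)+2) := by
        rw [h2, abs_div, abs_mul, abs_of_pos (by positivity : (0:ℝ) < (m:ℝ)+2)]
    _ ≤ 1 * 1 / ((m:ℝ)+2) := by
        gcongr
    _ = 1 / ((m:ℝ)+2) := by ring

lemma bb_pascal (x : ℝ) (j : ℕ) : bb (x+1) (j+1) = bb x (j+1) + bb x j := by
  have h : (j.factorial : ℝ) ≠ 0 := Nat.cast_ne_zero.mpr j.factorial_ne_zero
  have key : ∏ k ∈ Finset.range (j+1), (x + 1 - k) = (x+1) * ∏ k ∈ Finset.range j, (x - k) := by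
    rw [Finset.prod_range_succ']
    have e : ∀ k ∈ Finset.range j, (x + 1 - (((k:ℕ)+1:ℕ):ℝ)) = x - k := by
      intro k _; push_cast; ring
    rw [Finset.prod_congr rfl e]
    push_cast; ring
  rw [bb, bb, bb, key, Finset.prod_range_succ, Nat.factorial_succ]
  push_cast
  field_simp
  ring

lemma sign_prod (x : ℝ) (p : ℕ) (hpos : ∀ k : ℕ, k < p → 0 ≤ x - k)
    (hneg : ∀ k : ℕ, p ≤ k → x - k ≤ 0) :
    ∀ j, p ≤ j → 0 ≤ (-1:ℝ)^(j+p) * ∏ k ∈ Finset.range j, (x - k) := by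
  intro j hj
  induction j, hj using Nat.le_induction with
  | base =>
    have : ((-1:ℝ))^(p+p) = 1 := Even.neg_one_pow ⟨p, by ring⟩
    rw [this, one_mul]
    exact Finset.prod_nonneg (fun k hk => hpos k (Finset.mem_range.mp hk))
  | succ j hj ih =>
    rw [Finset.prod_range_succ]
    have e : ((-1:ℝ))^(j+1+p) = (-1) * (-1:ℝ)^(j+p) := by
      rw [show j+1+p = (j+p)+1 by omega, pow_succ]; ring
    rw [e]
    have : (-1:ℝ) * (-1:ℝ)^(j+p) * ((∏ k ∈ Finset.range j, (x - k)) * (x - j))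
        = ((-1:ℝ)^(j+p) * ∏ k ∈ Finset.range j, (x - k)) * ((j:ℝ) - x) := by ring
    rw [this]
    exact mul_nonneg ih (by linarith [hneg j hj])

lemma bb_abs_sign {x : ℝ} (p : ℕ) (hpos : ∀ k : ℕ, k < p → 0 ≤ x - k)
    (hneg : ∀ k : ℕ, p ≤ k → x - k ≤ 0) {j : ℕ} (hj : p ≤ j) :
    |bb x j| = (-1:ℝ)^(j+p) * bb x j := by
  have h := sign_prod x p hpos hneg j hj
  have hfac : (0:ℝ) < j.factorial := by positivity
  have e : (-1:ℝ)^(j+p) * bb x j = ((-1:ℝ)^(j+p) * ∏ k ∈ Finset.range j, (x - k)) / j.factorial := by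
    rw [bb]; ring
  rw [e, bb, abs_div, abs_of_pos hfac]
  congr 1
  rw [← abs_of_nonneg h, abs_mul, abs_pow, abs_neg, abs_one, one_pow, one_mul]

lemma bb_tail_eq {x : ℝ} (hx : 0 ≤ x) {t : ℕ} (ht : Nat.floor x ≤ t) :
    |bb x (t+1)| = |bb (x-1) t| - |bb (x-1) (t+1)| := by
  set m := Nat.floor x with hm
  have hfl : (m:ℝ) ≤ x := Nat.floor_le hx
  have hfu : x < m + 1 := Nat.lt_floor_add_one x
  have hposx : ∀ k : ℕ, k < m+1 → 0 ≤ x - k := by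
    intro k hk
    have : (k:ℝ) ≤ m := by exact_mod_cast Nat.lt_succ_iff.mp hk
    linarith
  have hnegx : ∀ k : ℕ, m+1 ≤ k → x - k ≤ 0 := by
    intro k hk
    have : ((m:ℝ)+1) ≤ k := by exact_mod_cast hk
    linarith
  have hposu : ∀ k : ℕ, k < m → 0 ≤ (x-1) - k := by
    intro k hk
    have : (k:ℝ) ≤ (m:ℝ)-1 := by
      have : (k:ℝ)+1 ≤ m := by exact_mod_cast hk
      linarith
    linarith
  have hnegu : ∀ k : ℕ, m ≤ k → (x-1) - k ≤ 0 := by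
    intro k hk
    have : (m:ℝ) ≤ k := by exact_mod_cast hk
    linarith
  have e1 : |bb x (t+1)| = (-1:ℝ)^(t+1+(m+1)) * bb x (t+1) :=
    bb_abs_sign (m+1) hposx hnegx (by omega)
  have e2 : |bb (x-1) t| = (-1:ℝ)^(t+m) * bb (x-1) t :=
    bb_abs_sign m hposu hnegu (by omega)
  have e3 : |bb (x-1) (t+1)| = (-1:ℝ)^(t+1+m) * bb (x-1) (t+1) :=
    bb_abs_sign m hposu hnegu (by omega)
  have pas : bb x (t+1) = bb (x-1) (t+1) + bb (x-1) t := by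
    have := bb_pascal (x-1) t
    rw [sub_add_cancel] at this
    exact this
  rw [e1, e2, e3, pas]
  have s1 : (-1:ℝ)^(t+1+(m+1)) = (-1:ℝ)^(t+m) := by
    rw [show t+1+(m+1) = (t+m)+2 by omega, pow_add]
    norm_num
  have s2 : (-1:ℝ)^(t+1+m) = -(-1:ℝ)^(t+m) := by
    rw [show t+1+m = (t+m)+1 by omega, pow_succ]
    ring
  rw [s1, s2]
  ring

lemma bb_le_choose {x : ℝ} (hx : 0 ≤ x) {j : ℕ} (hj : j ≤ Nat.floor x) :
    bb x j ≤ ((Nat.floor x + 1).choose j : ℝ) := by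
  set m := Nat.floor x with hm
  rw [← bb_nat]
  have hfl : (m:ℝ) ≤ x := Nat.floor_le hx
  have hfu : x < m + 1 := Nat.lt_floor_add_one x
  rw [bb, bb]
  gcongr with k hk
  · intro k hk
    simp only [Finset.mem_range] at hk
    have : (k:ℝ) + 1 ≤ m := by exact_mod_cast by omega
    linarith
  · simp only [Finset.mem_range] at hk
    push_cast
    linarith
  
lemma bb_row_sum {x : ℝ} (hx : 0 ≤ x) {n : ℕ} (hn : Nat.floor x ≤ n) :
    ∑ j ∈ Finset.range (n+1), |bb x j| ≤ 2 ^ (Nat.floor x + 1) := by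
  set m := Nat.floor x with hm
  have hfl : (m:ℝ) ≤ x := Nat.floor_le hx
  have hfu : x < m + 1 := Nat.lt_floor_add_one x
  have hsplit : ∑ j ∈ Finset.range (n+1), |bb x j|
      = ∑ j ∈ Finset.range (m+1), |bb x j| + ∑ j ∈ Finset.Ico (m+1) (n+1), |bb x j| := by
    rw [Finset.range_eq_Ico, ← Finset.sum_Ico_consecutive _ (by omega : 0 ≤ m+1) (by omega : m+1 ≤ n+1),
      ← Finset.range_eq_Ico]
  rw [hsplit]
  have hhead : ∑ j ∈ Finset.range (m+1), |bb x j| ≤ (2:ℝ)^(m+1) - 1 := by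
    have e1 : ∀ j ∈ Finset.range (m+1), |bb x j| ≤ ((m+1).choose j : ℝ) := by
      intro j hj
      simp only [Finset.mem_range] at hj
      rw [abs_of_nonneg (bb_nonneg hx (by omega))]
      exact bb_le_choose hx (by omega)
    calc ∑ j ∈ Finset.range (m+1), |bb x j| ≤ ∑ j ∈ Finset.range (m+1), ((m+1).choose j : ℝ) :=
          Finset.sum_le_sum e1
      _ = (2:ℝ)^(m+1) - 1 := by
          have h1 : ∑ j ∈ Finset.range (m+2), (m+1).choose j = 2^(m+1) := Nat.sum_range_choose (m+1)
          have h2 : ∑ j ∈ Finset.range (m+2), (m+1).choose j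
              = (∑ j ∈ Finset.range (m+1), (m+1).choose j) + (m+1).choose (m+1) := Finset.sum_range_succ _ _
          have h3 : (∑ j ∈ Finset.range (m+1), (m+1).choose j) = 2^(m+1) - 1 := by
            rw [h2] at h1
            simp at h1
            omega
          have := congrArg (Nat.cast (R := ℝ)) h3
          push_cast at this
          rw [this]
          have : (1:ℕ) ≤ 2^(m+1) := Nat.one_le_two_pow
          push_cast [Nat.cast_sub this]
          norm_num
  have htail : ∑ j ∈ Finset.Ico (m+1) (n+1), |bb x j| ≤ 1 := by
    have e : ∑ j ∈ Finset.Ico (m+1) (n+1), |bb x j|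
        = ∑ i ∈ Finset.range (n+1-(m+1)), |bb x (m+1+i)| := by
      rw [Finset.sum_Ico_eq_sum_range]
    rw [e]
    have e2 : ∀ i ∈ Finset.range (n+1-(m+1)), |bb x (m+1+i)|
        = |bb (x-1) (m+i)| - |bb (x-1) (m+i+1)| := by
      intro i _
      have := bb_tail_eq hx (show m ≤ m + i by omega)
      rw [show m+1+i = (m+i)+1 by omega]
      exact this
    rw [Finset.sum_congr rfl e2]
    have tele := Finset.sum_range_sub' (fun i => |bb (x-1) (m+i)|) (n+1-(m+1))
    simp only [← Nat.add_assoc] at tele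
    rw [tele]
    simp only [Nat.add_zero]
    have hlast : (0:ℝ) ≤ |bb (x-1) (m+(n+1-(m+1)))| := abs_nonneg _
    have hfirst : |bb (x-1) m| ≤ 1 := by
      rcases Nat.eq_zero_or_pos m with h0 | hpos
      · rw [h0]; rw [bb_zero]; norm_num
      · apply bb_abs_le_one
        · have : (1:ℝ) ≤ m := by exact_mod_cast hpos
          linarith
        · have hx1 : (0:ℝ) ≤ x - 1 := by
            have : (1:ℝ) ≤ m := by exact_mod_cast hpos
            linarith
          rw [Nat.floor_lt hx1]
          push_cast
          linarith
    linarith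
  have : (1:ℝ) ≤ (2:ℝ)^(m+1) := one_le_pow₀ (by norm_num)
  linarith

def AA (n : ℕ) (s : ℕ) : Finset (ℕ × ℕ × ℕ) :=
  (Finset.range (n+1) ×ˢ Finset.range (n+1) ×ˢ Finset.range (n+1)).filter
      (fun i => i.1 + i.2.1 + i.2.2 = s)

lemma mem_AA {n s : ℕ} {i : ℕ × ℕ × ℕ} :
    i ∈ AA n s ↔ (i.1 ≤ n ∧ i.2.1 ≤ n ∧ i.2.2 ≤ n ∧ i.1 + i.2.1 + i.2.2 = s) := by
  simp only [AA, Finset.mem_filter, Finset.mem_product, Finset.mem_range]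
  omega

noncomputable def TT (n : ℕ) (y z w : ℝ) : ℝ :=
  ∑ i ∈ AA n n, |bb y i.1| * |bb z i.2.1| * |bb w i.2.2|

lemma TT_swap (n : ℕ) (y z w : ℝ) : TT n y z w = TT n y w z := by
  rw [TT, TT]
  apply Finset.sum_nbij' (fun i => (i.1, i.2.2, i.2.1)) (fun i => (i.1, i.2.2, i.2.1))
  · intro a ha; rw [mem_AA] at *; dsimp only; omega
  · intro a ha; rw [mem_AA] at *; dsimp only; omega
  · intro a _; rfl
  · intro a _; rfl
  · intro a _; ring

lemma reindex2 (n : ℕ) (hn : 1 ≤ n) (f : ℕ × ℕ × ℕ → ℝ) :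
    ∑ i ∈ (AA n n).filter (fun i => i.2.1 ≠ 0), f (i.1, i.2.1 - 1, i.2.2)
      = ∑ j ∈ AA n (n-1), f j := by
  apply Finset.sum_nbij' (fun i => (i.1, i.2.1 - 1, i.2.2)) (fun j => (j.1, j.2.1 + 1, j.2.2))
  · intro a ha
    simp only [Finset.mem_filter, mem_AA] at ha ⊢
    omega
  · intro a ha
    rw [mem_AA] at ha
    simp only [Finset.mem_filter, mem_AA]
    omega
  · intro a ha
    simp only [Finset.mem_filter, mem_AA] at ha
    ext <;> dsimp only <;> omega
  · intro a _; rfl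
  · intro a _; rfl

lemma reindex1 (n : ℕ) (hn : 1 ≤ n) (f : ℕ × ℕ × ℕ → ℝ) :
    ∑ i ∈ (AA n n).filter (fun i => i.1 ≠ 0), f (i.1 - 1, i.2.1, i.2.2)
      = ∑ j ∈ AA n (n-1), f j := by
  apply Finset.sum_nbij' (fun i => (i.1 - 1, i.2.1, i.2.2)) (fun j => (j.1 + 1, j.2.1, j.2.2))
  · intro a ha
    simp only [Finset.mem_filter, mem_AA] at ha ⊢
    omega
  · intro a ha
    rw [mem_AA] at ha
    simp only [Finset.mem_filter, mem_AA]
    omega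
  · intro a ha
    simp only [Finset.mem_filter, mem_AA] at ha
    ext <;> dsimp only <;> omega
  · intro a _; rfl
  · intro a _; rfl

lemma pair_sum_bound {n : ℕ} {S : Finset (ℕ×ℕ×ℕ)} (hS : S ⊆ AA n n) {g h : ℕ → ℝ}
    (hg : ∀ j, 0 ≤ g j) (hh : ∀ j, 0 ≤ h j) :
    ∑ i ∈ S, g i.2.1 * h i.2.2 ≤
      (∑ j ∈ Finset.range (n+1), g j) * (∑ j ∈ Finset.range (n+1), h j) := by
  have hinj : ∀ x ∈ S, ∀ y ∈ S, (fun i => (i.2.1, i.2.2)) x = (fun i => (i.2.1, i.2.2)) y → x = y := by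
    intro a ha b hb hab
    have ha' := mem_AA.mp (hS ha)
    have hb' := mem_AA.mp (hS hb)
    simp only [Prod.mk.injEq] at hab
    have : a.1 = b.1 := by omega
    exact Prod.ext this (Prod.ext hab.1 hab.2)
  have himg : ∑ i ∈ S, g i.2.1 * h i.2.2
      = ∑ p ∈ S.image (fun i => (i.2.1, i.2.2)), g p.1 * h p.2 := by
    rw [Finset.sum_image hinj]
  rw [himg]
  have hle : ∑ p ∈ S.image (fun i => (i.2.1, i.2.2)), g p.1 * h p.2
      ≤ ∑ p ∈ Finset.range (n+1) ×ˢ Finset.range (n+1), g p.1 * h p.2 := by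
    apply Finset.sum_le_sum_of_subset_of_nonneg
    · intro p hp
      simp only [Finset.mem_image] at hp
      obtain ⟨a, ha, rfl⟩ := hp
      have := mem_AA.mp (hS ha)
      simp only [Finset.mem_product, Finset.mem_range]
      omega
    · intro p _ _
      exact mul_nonneg (hg _) (hh _)
  refine le_trans hle (le_of_eq ?_)
  rw [Finset.sum_product, ← Finset.sum_mul_sum]


lemma TT_step {n : ℕ} (hn1 : 1 ≤ n) {y z w : ℝ} (hy : 0 ≤ y) (hz : 1 ≤ z) (hw : 0 ≤ w)
    (hzn : Nat.floor (z-1) ≤ n) (hwn : Nat.floor w ≤ n) :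
    TT n y z w ≤ TT n (y+1) (z-1) w +
      (2:ℝ) ^ (Nat.floor (z-1) + Nat.floor w + 3) / ((Nat.floor y : ℝ) + 2) := by
  set m := Nat.floor y with hm
  have hz0 : (0:ℝ) ≤ z - 1 := by linarith
  set U : ℝ := ∑ i ∈ AA n n, |bb y i.1| * (|bb (z-1) i.2.1| * |bb w i.2.2|) with hU
  set W : ℝ := ∑ j ∈ AA n (n-1), |bb y j.1| * (|bb (z-1) j.2.1| * |bb w j.2.2|) with hW
  set E : ℝ := ∑ i ∈ (AA n n).filter (fun i => m+2 ≤ i.1),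
      2 * |bb y i.1| * (|bb (z-1) i.2.1| * |bb w i.2.2|) with hE
  have step1 : TT n y z w ≤ U + W := by
    have pt : ∀ i ∈ AA n n, |bb y i.1| * |bb z i.2.1| * |bb w i.2.2| ≤
        |bb y i.1| * (|bb (z-1) i.2.1| * |bb w i.2.2|) +
        (if i.2.1 ≠ 0 then |bb y i.1| * (|bb (z-1) (i.2.1-1)| * |bb w i.2.2|) else 0) := by
      intro i _
      rcases Nat.eq_zero_or_pos i.2.1 with h0 | hpos
      · rw [h0, if_neg (by omega), bb_zero, bb_zero, add_zero, abs_one]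
        apply le_of_eq
        ring
      · obtain ⟨k, hk⟩ : ∃ k, i.2.1 = k + 1 := ⟨i.2.1 - 1, by omega⟩
        rw [hk, if_pos (by omega : k+1 ≠ 0), Nat.add_sub_cancel]
        have hb : |bb z (k+1)| ≤ |bb (z-1) (k+1)| + |bb (z-1) k| := by
          have hpas : bb z (k+1) = bb (z-1) (k+1) + bb (z-1) k := by
            have := bb_pascal (z-1) k
            rw [sub_add_cancel] at this
            exact this
          rw [hpas]
          exact abs_add_le _ _
        calc |bb y i.1| * |bb z (k+1)| * |bb w i.2.2|
            = (|bb y i.1| * |bb w i.2.2|) * |bb z (k+1)| := by ring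
          _ ≤ (|bb y i.1| * |bb w i.2.2|) * (|bb (z-1) (k+1)| + |bb (z-1) k|) :=
              mul_le_mul_of_nonneg_left hb (by positivity)
          _ = |bb y i.1| * (|bb (z-1) (k+1)| * |bb w i.2.2|)
              + |bb y i.1| * (|bb (z-1) k| * |bb w i.2.2|) := by ring
    calc TT n y z w ≤ ∑ i ∈ AA n n, (|bb y i.1| * (|bb (z-1) i.2.1| * |bb w i.2.2|) +
          (if i.2.1 ≠ 0 then |bb y i.1| * (|bb (z-1) (i.2.1-1)| * |bb w i.2.2|) else 0)) :=
          Finset.sum_le_sum pt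
      _ = U + ∑ i ∈ AA n n, (if i.2.1 ≠ 0 then |bb y i.1| * (|bb (z-1) (i.2.1-1)| * |bb w i.2.2|) else 0) := by
          rw [Finset.sum_add_distrib]
      _ = U + W := by
          congr 1
          rw [← Finset.sum_filter]
          have hre := reindex2 n hn1 (fun j => |bb y j.1| * (|bb (z-1) j.2.1| * |bb w j.2.2|))
          simp only at hre
          rw [hW]
          exact hre
  have step2 : U + W - E ≤ TT n (y+1) (z-1) w := by
    have pt2 : ∀ i ∈ AA n n,
        |bb y i.1| * (|bb (z-1) i.2.1| * |bb w i.2.2|)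
          + (if i.1 ≠ 0 then |bb y (i.1-1)| * (|bb (z-1) i.2.1| * |bb w i.2.2|) else 0)
          - (if m+2 ≤ i.1 then 2 * |bb y i.1| * (|bb (z-1) i.2.1| * |bb w i.2.2|) else 0)
        ≤ |bb (y+1) i.1| * (|bb (z-1) i.2.1| * |bb w i.2.2|) := by
      intro i _
      have hPnn : (0:ℝ) ≤ |bb (z-1) i.2.1| * |bb w i.2.2| :=
        mul_nonneg (abs_nonneg _) (abs_nonneg _)
      rcases Nat.eq_zero_or_pos i.1 with h0 | hpos
      · rw [h0, if_neg (by omega), if_neg (by omega : ¬ (m+2 ≤ 0)), bb_zero, bb_zero]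
        simp
      · obtain ⟨k, hk⟩ : ∃ k, i.1 = k + 1 := ⟨i.1 - 1, by omega⟩
        rw [hk, if_pos (by omega : k+1 ≠ 0), Nat.add_sub_cancel]
        have hpas : bb (y+1) (k+1) = bb y (k+1) + bb y k := bb_pascal y k
        rcases Nat.lt_or_ge k (m+1) with hsm | hbig
        · rw [if_neg (by omega)]
          have h1 : 0 ≤ bb y (k+1) := bb_nonneg hy (by omega)
          have h2 : 0 ≤ bb y k := bb_nonneg hy (by omega)
          have heq : |bb (y+1) (k+1)| = |bb y (k+1)| + |bb y k| := by
            rw [hpas, abs_of_nonneg (by linarith), abs_of_nonneg h1, abs_of_nonneg h2]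
          rw [heq, sub_zero]
          apply le_of_eq
          ring
        · rw [if_pos (by omega)]
          have e : (bb y (k+1) + bb y k) + (-(bb y (k+1))) = bb y k := by ring
          have h3 : |bb y k| ≤ |bb y (k+1) + bb y k| + |bb y (k+1)| := by
            calc |bb y k| = |(bb y (k+1) + bb y k) + (-(bb y (k+1)))| := by rw [e]
              _ ≤ |bb y (k+1) + bb y k| + |(-(bb y (k+1)))| := abs_add_le _ _
              _ = |bb y (k+1) + bb y k| + |bb y (k+1)| := by rw [abs_neg]
          have habs : |bb y k| - |bb y (k+1)| ≤ |bb (y+1) (k+1)| := by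
            rw [hpas]; linarith
          nlinarith [mul_le_mul_of_nonneg_right habs hPnn]
    calc U + W - E
        = ∑ i ∈ AA n n, (|bb y i.1| * (|bb (z-1) i.2.1| * |bb w i.2.2|)
            + (if i.1 ≠ 0 then |bb y (i.1-1)| * (|bb (z-1) i.2.1| * |bb w i.2.2|) else 0)
            - (if m+2 ≤ i.1 then 2 * |bb y i.1| * (|bb (z-1) i.2.1| * |bb w i.2.2|) else 0)) := by
          rw [Finset.sum_sub_distrib, Finset.sum_add_distrib]
          congr 2
          · rw [← Finset.sum_filter]
            have hre := reindex1 n hn1 (fun j => |bb y j.1| * (|bb (z-1) j.2.1| * |bb w j.2.2|))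
            simp only at hre
            rw [hW]
            exact hre.symm
          · rw [← Finset.sum_filter]
      _ ≤ ∑ i ∈ AA n n, |bb (y+1) i.1| * (|bb (z-1) i.2.1| * |bb w i.2.2|) := Finset.sum_le_sum pt2
      _ = TT n (y+1) (z-1) w := by
          rw [TT]
          exact Finset.sum_congr rfl (fun i _ => by ring)
  have stepE : E ≤ (2:ℝ) ^ (Nat.floor (z-1) + Nat.floor w + 3) / ((m : ℝ) + 2) := by
    have hfilter_sub : (AA n n).filter (fun i => m+2 ≤ i.1) ⊆ AA n n := Finset.filter_subset _ _
    have hpt : ∀ i ∈ (AA n n).filter (fun i => m+2 ≤ i.1),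
        2 * |bb y i.1| * (|bb (z-1) i.2.1| * |bb w i.2.2|) ≤
          (2 / ((m:ℝ)+2)) * (|bb (z-1) i.2.1| * |bb w i.2.2|) := by
      intro i hi
      simp only [Finset.mem_filter] at hi
      have hPnn : (0:ℝ) ≤ |bb (z-1) i.2.1| * |bb w i.2.2| :=
        mul_nonneg (abs_nonneg _) (abs_nonneg _)
      have hsmall : |bb y i.1| ≤ 1 / ((m:ℝ)+2) := by
        have h := bb_abs_small hy (j := i.1) (by omega)
        rw [← hm] at h
        push_cast at h
        exact h
      have h2 : 2 * |bb y i.1| ≤ 2 / ((m:ℝ)+2) := by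
        rw [div_eq_mul_one_div]
        nlinarith
      nlinarith [abs_nonneg (bb y i.1)]
    calc E ≤ ∑ i ∈ (AA n n).filter (fun i => m+2 ≤ i.1),
          (2 / ((m:ℝ)+2)) * (|bb (z-1) i.2.1| * |bb w i.2.2|) := Finset.sum_le_sum hpt
      _ = (2 / ((m:ℝ)+2)) * ∑ i ∈ (AA n n).filter (fun i => m+2 ≤ i.1),
          (|bb (z-1) i.2.1| * |bb w i.2.2|) := by rw [Finset.mul_sum]
      _ ≤ (2 / ((m:ℝ)+2)) * ((∑ j ∈ Finset.range (n+1), |bb (z-1) j|) * (∑ j ∈ Finset.range (n+1), |bb w j|)) := by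
          apply mul_le_mul_of_nonneg_left _ (by positivity)
          exact pair_sum_bound hfilter_sub (fun j => abs_nonneg _) (fun j => abs_nonneg _)
      _ ≤ (2 / ((m:ℝ)+2)) * ((2:ℝ)^(Nat.floor (z-1) + 1) * (2:ℝ)^(Nat.floor w + 1)) := by
          apply mul_le_mul_of_nonneg_left _ (by positivity)
          apply mul_le_mul (bb_row_sum hz0 hzn) (bb_row_sum hw hwn)
            (Finset.sum_nonneg (fun j _ => abs_nonneg _)) (by positivity)
      _ = (2:ℝ) ^ (Nat.floor (z-1) + Nat.floor w + 3) / ((m : ℝ) + 2) := by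
          rw [show Nat.floor (z-1) + Nat.floor w + 3 = (Nat.floor (z-1) + 1) + (Nat.floor w + 1) + 1 by omega]
          rw [pow_add, pow_add, pow_one]
          ring
  linarith

lemma TT_drain {n : ℕ} (hn1 : 1 ≤ n) : ∀ (r : ℕ) (y α w : ℝ), 0 ≤ y → 0 ≤ α → α < 1 → 0 ≤ w →
    Nat.floor w ≤ n → r ≤ n →
    TT n y ((r:ℝ) + α) w ≤ TT n (y + r) α w +
      ∑ t ∈ Finset.range r, (2:ℝ) ^ ((r - t - 1) + Nat.floor w + 3) / ((Nat.floor y : ℝ) + t + 2) := by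
  intro r
  induction r with
  | zero =>
    intro y α w hy hα hα' hw hwn _
    rw [show ((0:ℕ):ℝ) + α = α by norm_num, show y + ((0:ℕ):ℝ) = y by norm_num,
      Finset.range_zero, Finset.sum_empty, add_zero]
  | succ r ih =>
    intro y α w hy hα hα' hw hwn hrn
    have hz : (1:ℝ) ≤ ((r+1:ℕ):ℝ) + α := by
      push_cast
      linarith [Nat.cast_nonneg (α := ℝ) r]
    have hz1 : ((r+1:ℕ):ℝ) + α - 1 = (r:ℝ) + α := by push_cast; ring
    have hfz : Nat.floor ((r:ℝ) + α) = r := by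
      rw [add_comm, Nat.floor_add_natCast hα, Nat.floor_eq_zero.mpr hα']
      omega
    have hstep := TT_step hn1 hy hz hw (by rw [hz1, hfz]; omega) hwn
    rw [hz1, hfz] at hstep
    have hih := ih (y+1) α w (by linarith) hα hα' hw hwn (by omega)
    have hfy1 : Nat.floor (y+1) = Nat.floor y + 1 := Nat.floor_add_one hy
    rw [hfy1] at hih
    have harg : y + 1 + (r:ℝ) = y + ((r+1:ℕ):ℝ) := by push_cast; ring
    rw [harg] at hih
    have hsum : ∑ t ∈ Finset.range (r+1), (2:ℝ) ^ ((r + 1 - t - 1) + Nat.floor w + 3) / ((Nat.floor y : ℝ) + t + 2)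
        = (∑ t ∈ Finset.range r, (2:ℝ) ^ ((r - t - 1) + Nat.floor w + 3) / (((Nat.floor y + 1 : ℕ) : ℝ) + t + 2))
          + (2:ℝ) ^ (r + Nat.floor w + 3) / ((Nat.floor y : ℝ) + 2) := by
      rw [Finset.sum_range_succ' (fun t => (2:ℝ) ^ ((r + 1 - t - 1) + Nat.floor w + 3) / ((Nat.floor y : ℝ) + t + 2)) r]
      congr 1
      · apply Finset.sum_congr rfl
        intro t _
        rw [show r + 1 - (t+1) - 1 = r - t - 1 by omega]
        push_cast
        ring_nf
      · rw [show r + 1 - 0 - 1 = r by omega]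
        push_cast
        ring_nf
    rw [hsum]
    calc TT n y (((r+1:ℕ):ℝ) + α) w
        ≤ TT n (y+1) ((r:ℝ) + α) w + (2:ℝ) ^ (r + Nat.floor w + 3) / ((Nat.floor y : ℝ) + 2) := hstep
      _ ≤ (TT n (y + ((r+1:ℕ):ℝ)) α w
            + ∑ t ∈ Finset.range r, (2:ℝ) ^ ((r - t - 1) + Nat.floor w + 3) / (((Nat.floor y + 1 : ℕ) : ℝ) + t + 2))
          + (2:ℝ) ^ (r + Nat.floor w + 3) / ((Nat.floor y : ℝ) + 2) := by
          exact add_le_add hih le_rfl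
      _ = TT n (y + ((r+1:ℕ):ℝ)) α w + _ := by ring

lemma gamma_prod {x : ℝ} (hx : 0 ≤ x) :
    ∀ i : ℕ, (∀ k : ℕ, k < i → x ≠ k) →
      Real.Gamma (x - i + 1) ≠ 0 ∧
        Real.Gamma (x + 1) = (∏ k ∈ Finset.range i, (x - k)) * Real.Gamma (x - i + 1) := by
  intro i
  induction i with
  | zero =>
    intro _
    constructor
    · push_cast
      rw [show x - 0 + 1 = x + 1 by ring]
      exact (Real.Gamma_pos_of_pos (by linarith)).ne'
    · push_cast
      rw [show x - 0 + 1 = x + 1 by ring]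
      simp
  | succ i ih =>
    intro hne
    obtain ⟨hne0, heq⟩ := ih (fun k hk => hne k (by omega))
    have hxi : x - i ≠ 0 := sub_ne_zero.mpr (hne i (by omega))
    have hg : Real.Gamma (x - i + 1) = (x - i) * Real.Gamma (x - i) := Real.Gamma_add_one hxi
    have hgne : Real.Gamma (x - i) ≠ 0 := by
      apply Real.Gamma_ne_zero
      intro mm
      intro hcon
      rcases le_or_gt mm i with hmi | hmi
      · have := hne (i - mm) (by omega)
        apply this
        have : ((i - mm : ℕ) : ℝ) = (i : ℝ) - mm := by
          push_cast [Nat.cast_sub hmi]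
          ring
        rw [this]
        linarith
      · have : ((i:ℝ) + 1) ≤ mm := by exact_mod_cast hmi
        linarith
    constructor
    · rw [show x - (i+1:ℕ) + 1 = x - i by push_cast; ring]
      exact hgne
    · rw [show x - (i+1:ℕ) + 1 = x - i by push_cast; ring, Finset.prod_range_succ]
      rw [heq, hg]
      ring

lemma gamma_div_eq_bb {x : ℝ} (hx : 0 ≤ x) (i : ℕ) :
    Real.Gamma (x + 1) / (i.factorial * Real.Gamma (x - i + 1)) = bb x i := by
  by_cases hcase : ∀ k : ℕ, k < i → x ≠ k
  · obtain ⟨hne0, heq⟩ := gamma_prod hx i hcase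
    have hfac : (i.factorial : ℝ) ≠ 0 := Nat.cast_ne_zero.mpr i.factorial_ne_zero
    rw [heq, bb]
    field_simp
  · push_neg at hcase
    obtain ⟨k, hk, hxk⟩ := hcase
    have hzero : Real.Gamma (x - i + 1) = 0 := by
      have : x - i + 1 = -((i - k - 1 : ℕ) : ℝ) := by
        have hc : ((i - k - 1 : ℕ):ℝ) = (i:ℝ) - (k:ℝ) - 1 := by
          rw [show i - k - 1 = i - (k+1) by omega, Nat.cast_sub (by omega)]
          push_cast
          ring
        rw [hc, hxk]
        ring
      rw [this]
      exact Real.Gamma_neg_nat_eq_zero _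
    have hbb : bb x i = 0 := by
      rw [bb]
      rw [Finset.prod_eq_zero (Finset.mem_range.mpr hk) (by rw [hxk]; ring)]
      simp
    rw [hzero, hbb, mul_zero, div_zero]

lemma geom_aux : ∀ (r c : ℕ), ∑ t ∈ Finset.range r, (2:ℝ)^(r-t-1+c) ≤ 2^(r+c) := by
  intro r
  induction r with
  | zero => intro c; rw [Finset.range_zero, Finset.sum_empty]; positivity
  | succ r ih =>
    intro c
    rw [Finset.sum_range_succ' (fun t => (2:ℝ)^(r+1-t-1+c)) r]
    have e1 : ∀ t ∈ Finset.range r, (2:ℝ)^(r+1-(t+1)-1+c) = (2:ℝ)^(r-t-1+c) := by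
      intro t _
      congr 1
      omega
    rw [Finset.sum_congr rfl e1]
    have e2 : (2:ℝ)^(r+1-0-1+c) = 2^(r+c) := by norm_num
    rw [e2]
    have := ih c
    have e3 : (2:ℝ)^(r+1+c) = 2^(r+c) + 2^(r+c) := by
      rw [show r+1+c = (r+c)+1 by omega, pow_succ]
      ring
    linarith

/-- The fundamental Lagrange interpolation polynomial value `l_i(λ)` for
equally spaced nodes of the triangle, degree `n`. -/
noncomputable def lagPoly (n : ℕ) (lam : ℝ × ℝ × ℝ) (i : ℕ × ℕ × ℕ) : ℝ :=
  (Real.Gamma (n * lam.1 + 1) / (i.1.factorial * Real.Gamma (n * lam.1 - i.1 + 1))) *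
  (Real.Gamma (n * lam.2.1 + 1) / (i.2.1.factorial * Real.Gamma (n * lam.2.1 - i.2.1 + 1))) *
  (Real.Gamma (n * lam.2.2 + 1) / (i.2.2.factorial * Real.Gamma (n * lam.2.2 - i.2.2 + 1)))

/-- The Lebesgue function `L_n(λ)` of Lagrange interpolation at equally spaced
nodes of the triangle. -/
noncomputable def Leb (n : ℕ) (lam : ℝ × ℝ × ℝ) : ℝ :=
  ∑ i ∈ (Finset.range (n+1) ×ˢ Finset.range (n+1) ×ˢ Finset.range (n+1)).filter
      (fun i => i.1 + i.2.1 + i.2.2 = n), |lagPoly n lam i|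

lemma Leb_eq_TT {n : ℕ} (hn : 0 < n) {y z w : ℝ} (hy : 0 ≤ y) (hz : 0 ≤ z) (hw : 0 ≤ w) :
    Leb n (y / n, z / n, w / n) = TT n y z w := by
  have hn0 : (n:ℝ) ≠ 0 := Nat.cast_ne_zero.mpr hn.ne'
  have hcan : ∀ u : ℝ, (n:ℝ) * (u / n) = u := fun u => by field_simp
  rw [Leb, TT]
  apply Finset.sum_congr rfl
  intro i _
  rw [lagPoly]
  simp only [hcan]
  rw [gamma_div_eq_bb hy, gamma_div_eq_bb hz, gamma_div_eq_bb hw, abs_mul, abs_mul]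

theorem reduction_to_corner (n : ℕ) (hn : 4 ≤ n) (r₁ r₂ r₃ : ℕ)
    (hr : r₁ + r₂ + r₃ = n - 1) (α₁ α₂ α₃ : ℝ)
    (hα₁ : -1 < α₁) (hα₁' : α₁ < 1)
    (hα₂ : 0 ≤ α₂) (hα₂' : α₂ < 1) (hα₃ : 0 ≤ α₃) (hα₃' : α₃ < 1)
    (hs : α₁ + α₂ + α₃ = 1)
    (h12 : (r₁:ℝ) + α₁ ≥ (r₂:ℝ) + α₂) (h13 : (r₁:ℝ) + α₁ ≥ (r₃:ℝ) + α₃) :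
    Leb n (((r₁:ℝ) + α₁)/n, ((r₂:ℝ) + α₂)/n, ((r₃:ℝ) + α₃)/n) ≤
      Leb n (((n:ℝ) - 1 + α₁)/n, α₂/n, α₃/n)
        + (2:ℝ) ^ (2*(n:ℝ)/3) * (10 + 2 * Real.log n) := by
  have hn1 : 1 ≤ n := by omega
  have hncast : (4:ℝ) ≤ n := by exact_mod_cast hn
  have hcast : (r₁:ℝ) + r₂ + r₃ = (n:ℝ) - 1 := by
    have := congrArg (Nat.cast (R := ℝ)) hr
    push_cast [Nat.cast_sub (by omega : 1 ≤ n)] at this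
    linarith
  have h3x : (n:ℝ) ≤ 3 * ((r₁:ℝ) + α₁) := by linarith
  have hr₁pos : 1 ≤ r₁ := by
    have h01 : (0:ℝ) < r₁ := by linarith
    have h02 : 0 < r₁ := by exact_mod_cast h01
    omega
  have hx₁ : (0:ℝ) ≤ (r₁:ℝ) + α₁ := by linarith
  have hx₂ : (0:ℝ) ≤ (r₂:ℝ) + α₂ := by positivity
  have hx₃ : (0:ℝ) ≤ (r₃:ℝ) + α₃ := by positivity
  -- floors
  have hf₃ : Nat.floor ((r₃:ℝ) + α₃) = r₃ := by
    rw [add_comm, Nat.floor_add_natCast hα₃, Nat.floor_eq_zero.mpr hα₃']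
    omega
  have hf₂0 : Nat.floor α₂ = 0 := Nat.floor_eq_zero.mpr hα₂'
  have hfx₁ : r₁ - 1 ≤ Nat.floor ((r₁:ℝ) + α₁) := by
    apply Nat.le_floor
    rw [Nat.cast_sub hr₁pos]
    push_cast
    linarith
  have hfx₁r₂ : r₁ - 1 + r₂ ≤ Nat.floor ((r₁:ℝ) + α₁ + r₂) := by
    apply Nat.le_floor
    push_cast [Nat.cast_sub hr₁pos]
    linarith
  -- first drain
  have hd1 := TT_drain hn1 r₂ ((r₁:ℝ) + α₁) α₂ ((r₃:ℝ) + α₃) hx₁ hα₂ hα₂' hx₃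
    (by rw [hf₃]; omega) (by omega)
  rw [hf₃] at hd1
  -- swap
  have hsw1 : TT n ((r₁:ℝ) + α₁ + r₂) α₂ ((r₃:ℝ) + α₃)
      = TT n ((r₁:ℝ) + α₁ + r₂) ((r₃:ℝ) + α₃) α₂ := TT_swap _ _ _ _
  -- second drain
  have hd2 := TT_drain hn1 r₃ ((r₁:ℝ) + α₁ + r₂) α₃ α₂ (by positivity) hα₃ hα₃' hα₂
    (by rw [hf₂0]; omega) (by omega)
  rw [hf₂0] at hd2
  -- swap back
  have hsw2 : TT n ((r₁:ℝ) + α₁ + r₂ + r₃) α₃ α₂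
      = TT n ((r₁:ℝ) + α₁ + r₂ + r₃) α₂ α₃ := TT_swap _ _ _ _
  have hfinal_arg : (r₁:ℝ) + α₁ + r₂ + r₃ = (n:ℝ) - 1 + α₁ := by linarith
  -- error sums bounds
  have hdenpos : (0:ℝ) < (r₁:ℝ) + 1 := by positivity
  have hS₁ : ∑ t ∈ Finset.range r₂, (2:ℝ) ^ ((r₂ - t - 1) + r₃ + 3) / ((Nat.floor ((r₁:ℝ) + α₁) : ℝ) + t + 2)
      ≤ (2:ℝ) ^ (r₂ + (r₃ + 3)) / ((r₁:ℝ) + 1) := by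
    have hb : ∀ t ∈ Finset.range r₂,
        (2:ℝ) ^ ((r₂ - t - 1) + r₃ + 3) / ((Nat.floor ((r₁:ℝ) + α₁) : ℝ) + t + 2)
          ≤ (2:ℝ) ^ ((r₂ - t - 1) + (r₃ + 3)) / ((r₁:ℝ) + 1) := by
      intro t _
      rw [show (r₂ - t - 1) + (r₃ + 3) = (r₂ - t - 1) + r₃ + 3 by omega]
      apply div_le_div_of_nonneg_left (by positivity) hdenpos
      have : ((r₁ - 1 : ℕ):ℝ) ≤ (Nat.floor ((r₁:ℝ) + α₁) : ℝ) := by exact_mod_cast hfx₁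
      rw [Nat.cast_sub hr₁pos] at this
      push_cast at this ⊢
      have ht : (0:ℝ) ≤ t := Nat.cast_nonneg t
      linarith
    calc _ ≤ ∑ t ∈ Finset.range r₂, (2:ℝ) ^ ((r₂ - t - 1) + (r₃ + 3)) / ((r₁:ℝ) + 1) :=
          Finset.sum_le_sum hb
      _ = (∑ t ∈ Finset.range r₂, (2:ℝ) ^ ((r₂ - t - 1) + (r₃ + 3))) / ((r₁:ℝ) + 1) := by
          rw [Finset.sum_div]
      _ ≤ (2:ℝ) ^ (r₂ + (r₃ + 3)) / ((r₁:ℝ) + 1) := by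
          apply div_le_div_of_nonneg_right (geom_aux r₂ (r₃ + 3)) hdenpos.le
  have hS₂ : ∑ t ∈ Finset.range r₃, (2:ℝ) ^ ((r₃ - t - 1) + 0 + 3) / ((Nat.floor ((r₁:ℝ) + α₁ + r₂) : ℝ) + t + 2)
      ≤ (2:ℝ) ^ (r₃ + 3) / ((r₁:ℝ) + 1) := by
    have hb : ∀ t ∈ Finset.range r₃,
        (2:ℝ) ^ ((r₃ - t - 1) + 0 + 3) / ((Nat.floor ((r₁:ℝ) + α₁ + r₂) : ℝ) + t + 2)
          ≤ (2:ℝ) ^ ((r₃ - t - 1) + 3) / ((r₁:ℝ) + 1) := by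
      intro t _
      rw [show (r₃ - t - 1) + 3 = (r₃ - t - 1) + 0 + 3 by omega]
      apply div_le_div_of_nonneg_left (by positivity) hdenpos
      have : ((r₁ - 1 + r₂ : ℕ):ℝ) ≤ (Nat.floor ((r₁:ℝ) + α₁ + r₂) : ℝ) := by exact_mod_cast hfx₁r₂
      push_cast [Nat.cast_sub hr₁pos] at this
      have ht : (0:ℝ) ≤ t := Nat.cast_nonneg t
      have hr₂ : (0:ℝ) ≤ r₂ := Nat.cast_nonneg r₂
      linarith
    calc _ ≤ ∑ t ∈ Finset.range r₃, (2:ℝ) ^ ((r₃ - t - 1) + 3) / ((r₁:ℝ) + 1) :=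
          Finset.sum_le_sum hb
      _ = (∑ t ∈ Finset.range r₃, (2:ℝ) ^ ((r₃ - t - 1) + 3)) / ((r₁:ℝ) + 1) := by
          rw [Finset.sum_div]
      _ ≤ (2:ℝ) ^ (r₃ + 3) / ((r₁:ℝ) + 1) := by
          apply div_le_div_of_nonneg_right (geom_aux r₃ 3) hdenpos.le
  -- total error bound
  have hpow2 : (2:ℝ) ^ (r₂ + (r₃ + 3)) + (2:ℝ) ^ (r₃ + 3) ≤ (2:ℝ) ^ (r₂ + r₃ + 4) := by
    have h1 : (2:ℝ) ^ (r₃ + 3) ≤ (2:ℝ) ^ (r₂ + (r₃ + 3)) :=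
      pow_le_pow_right₀ one_le_two (by omega)
    have h2 : (2:ℝ) ^ (r₂ + r₃ + 4) = (2:ℝ) ^ (r₂ + (r₃ + 3)) + (2:ℝ) ^ (r₂ + (r₃ + 3)) := by
      rw [show r₂ + r₃ + 4 = (r₂ + (r₃ + 3)) + 1 by omega, pow_succ]
      ring
    linarith
  have hrpow : (2:ℝ) ^ (r₂ + r₃ + 4) / ((r₁:ℝ) + 1) ≤ (2:ℝ) ^ (2*(n:ℝ)/3) * (10 + 2 * Real.log n) := by
    have hKbound : ((r₂ + r₃ + 4 : ℕ) : ℝ) ≤ 2*(n:ℝ)/3 + 4 := by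
      push_cast
      linarith
    have hBpos : (0:ℝ) < (2:ℝ) ^ (2*(n:ℝ)/3) := Real.rpow_pos_of_pos (by norm_num) _
    have hp1 : (2:ℝ) ^ (r₂ + r₃ + 4 : ℕ) ≤ (2:ℝ) ^ (2*(n:ℝ)/3) * 16 := by
      rw [← Real.rpow_natCast 2 (r₂ + r₃ + 4)]
      calc (2:ℝ) ^ ((r₂ + r₃ + 4 : ℕ) : ℝ) ≤ (2:ℝ) ^ (2*(n:ℝ)/3 + 4) :=
            Real.rpow_le_rpow_of_exponent_le one_le_two hKbound
        _ = (2:ℝ) ^ (2*(n:ℝ)/3) * 16 := by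
            rw [Real.rpow_add (by norm_num)]
            norm_num
    have hinv : 1 / ((r₁:ℝ) + 1) ≤ 3 / (n:ℝ) := by
      rw [div_le_div_iff₀ hdenpos (by linarith)]
      linarith
    have hlog : (1:ℝ) ≤ Real.log n := by
      rw [Real.le_log_iff_exp_le (by linarith)]
      calc Real.exp 1 ≤ 2.7182818286 := (Real.exp_one_lt_d9).le
        _ ≤ (n:ℝ) := by linarith
    calc (2:ℝ) ^ (r₂ + r₃ + 4) / ((r₁:ℝ) + 1)
        = (2:ℝ) ^ (r₂ + r₃ + 4) * (1 / ((r₁:ℝ) + 1)) := by ring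
      _ ≤ ((2:ℝ) ^ (2*(n:ℝ)/3) * 16) * (3 / (n:ℝ)) := by
          apply mul_le_mul hp1 hinv (by positivity) (by positivity)
      _ = (2:ℝ) ^ (2*(n:ℝ)/3) * (48 / (n:ℝ)) := by ring
      _ ≤ (2:ℝ) ^ (2*(n:ℝ)/3) * (10 + 2 * Real.log n) := by
          apply mul_le_mul_of_nonneg_left _ hBpos.le
          have : 48 / (n:ℝ) ≤ 12 := by
            rw [div_le_iff₀ (by linarith)]
            linarith
          linarith
  -- put everything together
  have e1 : Leb n (((r₁:ℝ) + α₁)/n, ((r₂:ℝ) + α₂)/n, ((r₃:ℝ) + α₃)/n)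
      = TT n ((r₁:ℝ) + α₁) ((r₂:ℝ) + α₂) ((r₃:ℝ) + α₃) :=
    Leb_eq_TT (by omega) hx₁ hx₂ hx₃
  have e2 : Leb n (((n:ℝ) - 1 + α₁)/n, α₂/n, α₃/n)
      = TT n ((n:ℝ) - 1 + α₁) α₂ α₃ :=
    Leb_eq_TT (by omega) (by linarith) hα₂ hα₃
  rw [e1, e2]
  rw [hfinal_arg] at hsw2
  rw [hfinal_arg] at hd2
  calc TT n ((r₁:ℝ) + α₁) ((r₂:ℝ) + α₂) ((r₃:ℝ) + α₃)
      ≤ TT n ((r₁:ℝ) + α₁ + r₂) α₂ ((r₃:ℝ) + α₃)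
        + ∑ t ∈ Finset.range r₂, (2:ℝ) ^ ((r₂ - t - 1) + r₃ + 3) / ((Nat.floor ((r₁:ℝ) + α₁) : ℝ) + t + 2) := hd1
    _ ≤ (TT n ((n:ℝ) - 1 + α₁) α₂ α₃
        + ∑ t ∈ Finset.range r₃, (2:ℝ) ^ ((r₃ - t - 1) + 0 + 3) / ((Nat.floor ((r₁:ℝ) + α₁ + r₂) : ℝ) + t + 2))
        + ∑ t ∈ Finset.range r₂, (2:ℝ) ^ ((r₂ - t - 1) + r₃ + 3) / ((Nat.floor ((r₁:ℝ) + α₁) : ℝ) + t + 2) := by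
        refine add_le_add ?_ le_rfl
        rw [hsw1]
        rw [← hsw2]
        exact hd2
    _ ≤ TT n ((n:ℝ) - 1 + α₁) α₂ α₃ + (2:ℝ) ^ (2*(n:ℝ)/3) * (10 + 2 * Real.log n) := by
        have := add_le_add hS₂ hS₁
        have htot : (2:ℝ) ^ (r₃ + 3) / ((r₁:ℝ) + 1) + (2:ℝ) ^ (r₂ + (r₃ + 3)) / ((r₁:ℝ) + 1)
            ≤ (2:ℝ) ^ (r₂ + r₃ + 4) / ((r₁:ℝ) + 1) := by
          rw [← add_div]
          apply div_le_div_of_nonneg_right _ hdenpos.le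
          linarith
        linarith
end

section
/- Let p ∈ ℕ and let m, x, y be real numbers with y > 0, x > p, m > p + 1 and m − y > p + 1. Then Σ_{κ=0}^{p+1} C(x+1, κ)/(y·C(m−κ, y)) − Σ_{κ=0}^{p} C(x, κ)/((y+1)·C(m−κ, y+1)) = Σ_{κ=0}^{p} 2·C(x, κ)/(y·C(m−κ, y)) + C(x, p+1)/(y·C(m−p−1, y)). -/
open Finset

/-- Generalized binomial coefficient `C(a,b) = Γ(a+1)/(Γ(b+1)·Γ(a−b+1))`. -/
noncomputable def genBinom (a b : ℝ) : ℝ :=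
  Real.Gamma (a + 1) / (Real.Gamma (b + 1) * Real.Gamma (a - b + 1))

lemma genBinom_zero (a : ℝ) (ha : 0 < a + 1) : genBinom a 0 = 1 := by
  simp only [genBinom, sub_zero]
  rw [show (0:ℝ)+1 = 1 from by ring, Real.Gamma_one, one_mul,
    div_self (Real.Gamma_pos_of_pos ha).ne']

lemma pascal (x k : ℝ) (hk : 0 < k + 1) (hxk : 0 < x - k) :
    genBinom (x+1) (k+1) = genBinom x (k+1) + genBinom x k := by
  have hx1 : 0 < x + 1 := by linarith
  have hgx : Real.Gamma (x+1) ≠ 0 := (Real.Gamma_pos_of_pos hx1).ne'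
  have hgk : Real.Gamma (k+1) ≠ 0 := (Real.Gamma_pos_of_pos hk).ne'
  have hgxk : Real.Gamma (x-k) ≠ 0 := (Real.Gamma_pos_of_pos hxk).ne'
  simp only [genBinom]
  rw [show x+1-(k+1)+1 = x-k+1 from by ring, show x-(k+1)+1 = x-k from by ring,
    Real.Gamma_add_one (by linarith : x+1 ≠ 0),
    Real.Gamma_add_one (by linarith : k+1 ≠ 0),
    Real.Gamma_add_one (by linarith : x-k ≠ 0)]
  have h1 : k+1 ≠ 0 := by linarith
  have h3 : x-k ≠ 0 := by linarith
  field_simp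
  ring

lemma recip (a y : ℝ) (hy : 0 < y) (hay : 0 < a - y) :
    (y * genBinom (a-1) y)⁻¹
      = (y * genBinom a y)⁻¹ + ((y+1) * genBinom a (y+1))⁻¹ := by
  have ha : 0 < a := by linarith
  have hga : Real.Gamma a ≠ 0 := (Real.Gamma_pos_of_pos ha).ne'
  have hgy : Real.Gamma (y+1) ≠ 0 := (Real.Gamma_pos_of_pos (by linarith)).ne'
  have hgay : Real.Gamma (a-y) ≠ 0 := (Real.Gamma_pos_of_pos hay).ne'
  simp only [genBinom]
  rw [show a-1+1 = a from by ring, show a-1-y+1 = a-y from by ring,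
    show a-(y+1)+1 = a-y from by ring,
    Real.Gamma_add_one (by linarith : a ≠ 0),
    Real.Gamma_add_one (by linarith : y+1 ≠ 0),
    Real.Gamma_add_one (by linarith : a-y ≠ 0)]
  have h2 : y ≠ 0 := by linarith
  have h4 : a ≠ 0 := by linarith
  have h5 : y+1 ≠ 0 := by linarith
  have h6 : a-y ≠ 0 := by linarith
  field_simp
  ring

lemma key (x y a k : ℝ) (hy : 0 < y) (hay : 0 < a - y) (hk : 0 < k + 1)
    (hxk : 0 < x - k) :
    genBinom (x+1) (k+1) / (y * genBinom (a-1) y)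
      - genBinom x k / ((y+1) * genBinom a (y+1))
    = genBinom x k / (y * genBinom a y) + genBinom x (k+1) / (y * genBinom (a-1) y) := by
  have hp := pascal x k hk hxk
  have hr := recip a y hy hay
  linear_combination (y * genBinom (a-1) y)⁻¹ * hp + genBinom x k * hr

theorem sum_identity_Dstar (p : ℕ) (m x y : ℝ) (hy : 0 < y) (hx : (p:ℝ) < x)
    (hm : (p:ℝ) + 1 < m) (hmy : (p:ℝ) + 1 < m - y) :
    ∑ κ ∈ Finset.range (p + 2), genBinom (x + 1) κ / (y * genBinom (m - κ) y)
      - ∑ κ ∈ Finset.range (p + 1), genBinom x κ / ((y + 1) * genBinom (m - κ) (y + 1))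
    = ∑ κ ∈ Finset.range (p + 1), 2 * genBinom x κ / (y * genBinom (m - κ) y)
      + genBinom x (p + 1) / (y * genBinom (m - (p:ℝ) - 1) y) := by
  induction p with
  | zero =>
      simp only [Finset.sum_range_succ, Finset.sum_range_zero, Nat.cast_zero, Nat.cast_one]
      have hkey := key x y m 0 hy (by linarith) (by norm_num) (by linarith)
      have h0 : genBinom (x + 1) 0 = 1 := genBinom_zero (x + 1) (by linarith)
      have h0' : genBinom x 0 = 1 := genBinom_zero x (by linarith)
      norm_num at hkey ⊢
      rw [h0, h0'] at *
      linear_combination hkey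
  | succ n ih =>
      have hxn : (n:ℝ) < x := by push_cast at hx; linarith
      have hmn : (n:ℝ) + 1 < m := by push_cast at hm; linarith
      have hmyn : (n:ℝ) + 1 < m - y := by push_cast at hmy; linarith
      have hih := ih hxn hmn hmyn
      have hkey := key x y (m - ((n:ℝ) + 1)) ((n:ℝ) + 1) hy
        (by push_cast at hmy; linarith) (by positivity) (by push_cast at hx; linarith)
      rw [Finset.sum_range_succ
          (fun κ : ℕ => genBinom (x + 1) κ / (y * genBinom (m - κ) y)) (n + 2),
        Finset.sum_range_succ
          (fun κ : ℕ => genBinom x κ / ((y + 1) * genBinom (m - κ) (y + 1))) (n + 1),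
        Finset.sum_range_succ
          (fun κ : ℕ => 2 * genBinom x κ / (y * genBinom (m - κ) y)) (n + 1)]
      push_cast
      rw [show (n:ℝ) + 1 + 1 = (n:ℝ) + 2 from by ring] at hkey
      rw [show (n:ℝ) + 1 + 1 = (n:ℝ) + 2 from by ring]
      rw [show m - ((n:ℝ) + 1) - 1 = m - ((n:ℝ) + 2) from by ring] at hkey
      rw [show m - ((n:ℝ) + 1) - 1 = m - ((n:ℝ) + 2) from by ring]
      rw [show m - (n:ℝ) - 1 = m - ((n:ℝ) + 1) from by ring] at hih
      linear_combination hih + hkey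
end

section
/- Let m, q, r ∈ ℕ with q + r ≤ m, and let x, y be real numbers with 0 < x < r + 1 and 0 < y < q + 1. Then Σ_{κ=q}^{m−1−r} 1/((x+1)·C(m−κ, x+1)·y·C(κ, y)) − Σ_{κ=q+1}^{m−r} 1/(x·C(m−κ, x)·(y+1)·C(κ, y+1)) = 1/(x·C(r, x)·y·C(m−r, y)) − 1/(x·C(m−q, x)·y·C(q, y)). -/
open Finset

lemma key_step (a b x y : ℝ) (hx0 : 0 < x) (hxa : x < a) (hy0 : 0 < y)
    (hyb : y < b + 1) :
    1 / ((x + 1) * genBinom a (x + 1) * (y * genBinom b y))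
      - 1 / (x * genBinom (a - 1) x * ((y + 1) * genBinom (b + 1) (y + 1)))
    = 1 / (x * genBinom (a - 1) x * (y * genBinom (b + 1) y))
      - 1 / (x * genBinom a x * (y * genBinom b y)) := by
  have ha0 : 0 < a := lt_trans hx0 hxa
  have hax : 0 < a - x := by linarith
  have hby : 0 < b - y + 1 := by linarith
  have hb1 : 0 < b + 1 := by linarith
  unfold genBinom
  rw [show a - (x + 1) + 1 = a - x by ring, show a - 1 + 1 = a by ring,
    show a - 1 - x + 1 = a - x by ring, show b + 1 - (y + 1) + 1 = b - y + 1 by ring,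
    show b + 1 - y + 1 = (b - y + 1) + 1 by ring,
    Real.Gamma_add_one (ne_of_gt ha0),
    Real.Gamma_add_one (ne_of_gt (by linarith : (0:ℝ) < x + 1)),
    Real.Gamma_add_one (ne_of_gt (by linarith : (0:ℝ) < y + 1)),
    Real.Gamma_add_one (ne_of_gt hb1),
    Real.Gamma_add_one (ne_of_gt hax),
    Real.Gamma_add_one (ne_of_gt hby)]
  have hGx : 0 < Real.Gamma (x + 1) := Real.Gamma_pos_of_pos (by linarith)
  have hGy : 0 < Real.Gamma (y + 1) := Real.Gamma_pos_of_pos (by linarith)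
  have hGa : 0 < Real.Gamma a := Real.Gamma_pos_of_pos ha0
  have hGb : 0 < Real.Gamma (b + 1) := Real.Gamma_pos_of_pos hb1
  have hGax : 0 < Real.Gamma (a - x) := Real.Gamma_pos_of_pos hax
  have hGby : 0 < Real.Gamma (b - y + 1) := Real.Gamma_pos_of_pos hby
  field_simp
  ring

lemma telescope (F G H : ℕ → ℝ) (a n : ℕ)
    (h : ∀ κ, a ≤ κ → κ < a + n → G κ - H (κ + 1) = F (κ + 1) - F κ) :
    (∑ κ ∈ Finset.Ico a (a + n), G κ) - (∑ κ ∈ Finset.Icc (a + 1) (a + n), H κ)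
      = F (a + n) - F a := by
  induction n with
  | zero => simp
  | succ n ih =>
    rw [show a + (n + 1) = (a + n) + 1 by ring]
    rw [Finset.sum_Ico_succ_top (Nat.le_add_right a n),
      Finset.sum_Icc_succ_top (Nat.succ_le_succ (Nat.le_add_right a n))]
    have := ih (fun κ hκ hκ' => h κ hκ (by omega))
    have hstep := h (a + n) (Nat.le_add_right a n) (by omega)
    linarith

theorem sum_identity_Dstarstar (m q r : ℕ) (hqr : q + r ≤ m) (x y : ℝ)
    (hx0 : 0 < x) (hx : x < (r:ℝ) + 1) (hy0 : 0 < y) (hy : y < (q:ℝ) + 1) :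
    ∑ κ ∈ Finset.Ico q (m - r),
        1 / ((x + 1) * genBinom ((m:ℝ) - κ) (x + 1) * (y * genBinom κ y))
      - ∑ κ ∈ Finset.Icc (q + 1) (m - r),
        1 / (x * genBinom ((m:ℝ) - κ) x * ((y + 1) * genBinom κ (y + 1)))
    = 1 / (x * genBinom r x * (y * genBinom ((m:ℝ) - r) y))
      - 1 / (x * genBinom ((m:ℝ) - q) x * (y * genBinom q y)) := by
  have hq : q ≤ m - r := by omega
  set F : ℕ → ℝ := fun κ => 1 / (x * genBinom ((m:ℝ) - κ) x * (y * genBinom κ y)) with hF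
  have hmain := telescope F
    (fun κ => 1 / ((x + 1) * genBinom ((m:ℝ) - κ) (x + 1) * (y * genBinom κ y)))
    (fun κ => 1 / (x * genBinom ((m:ℝ) - κ) x * ((y + 1) * genBinom κ (y + 1))))
    q ((m - r) - q) ?_
  · rw [show q + ((m - r) - q) = m - r by omega] at hmain
    rw [hmain]
    have h1 : ((m - r : ℕ) : ℝ) = (m:ℝ) - r := by
      have : r ≤ m := by omega
      push_cast [this]; ring
    have h2 : (m:ℝ) - ((m - r : ℕ) : ℝ) = r := by rw [h1]; ring
    simp only [hF, h1, h2]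
    rw [show (m:ℝ) - ((m:ℝ) - r) = r by ring]
  · intro κ hκ1 hκ2
    have hκ2' : κ + r + 1 ≤ m := by omega
    have hax : x < (m:ℝ) - κ := by
      have : ((r:ℝ) + 1) ≤ (m:ℝ) - κ := by
        have := hκ2'
        push_cast
        have : (κ:ℝ) + r + 1 ≤ m := by exact_mod_cast hκ2'
        linarith
      linarith
    have hyb : y < (κ:ℝ) + 1 := by
      have : (q:ℝ) ≤ κ := by exact_mod_cast hκ1
      linarith
    have := key_step ((m:ℝ) - κ) (κ:ℝ) x y hx0 hax hy0 hyb
    simp only [hF]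
    push_cast
    rw [show (m:ℝ) - ((κ:ℝ) + 1) = ((m:ℝ) - κ) - 1 by ring]
    exact this
end

section
/- Let a, b be real numbers and let g(α) = Γ(a+α)/Γ(b+α), where Γ is the real Gamma function. If a ≥ b, then g is nondecreasing on the interval {α : b + α > 0}; if b ≥ a, then g is nonincreasing on the interval {α : a + α > 0}. -/
lemma convex_four {φ : ℝ → ℝ} (hφ : ConvexOn ℝ (Set.Ioi 0) φ) {m x y M : ℝ}
    (hm : 0 < m) (hmx : m ≤ x) (hxM : x ≤ M) (hsum : x + y = m + M) :
    φ x + φ y ≤ φ m + φ M := by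
  rcases eq_or_lt_of_le (hmx.trans hxM) with heq | hlt
  · have hx : x = m := le_antisymm (heq ▸ hxM) hmx
    have hy : y = M := by linarith
    rw [hx, hy]
  · set t : ℝ := (M - x) / (M - m) with ht
    have hMm : 0 < M - m := by linarith
    have ht0 : 0 ≤ t := div_nonneg (by linarith) hMm.le
    have ht1 : 0 ≤ 1 - t := by
      have : t ≤ 1 := (div_le_one hMm).mpr (by linarith)
      linarith
    have hmem : m ∈ Set.Ioi (0:ℝ) := hm
    have hMem : M ∈ Set.Ioi (0:ℝ) := lt_of_lt_of_le hm (by linarith)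
    have hx' : x = t * m + (1 - t) * M := by
      field_simp [ht]
      have h' : t * (M - m) = M - x := by rw [ht]; exact div_mul_cancel₀ _ hMm.ne'
      linear_combination h'
    have hy' : y = (1 - t) * m + t * M := by
      field_simp [ht]
      ring_nf
      nlinarith [hsum]
    have h1 := hφ.2 hmem hMem ht0 ht1 (by ring)
    have h2 := hφ.2 hmem hMem ht1 ht0 (by ring)
    simp only [smul_eq_mul] at h1 h2
    rw [← hx'] at h1
    rw [← hy'] at h2
    nlinarith [h1, h2]

lemma gamma_prod_s7 (a b α β : ℝ) (hab : b ≤ a) (hαβ : α ≤ β) (h : 0 < b + α) :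
    Real.Gamma (a + α) * Real.Gamma (b + β) ≤ Real.Gamma (b + α) * Real.Gamma (a + β) := by
  have haα : 0 < a + α := by linarith
  have hbβ : 0 < b + β := by linarith
  have haβ : 0 < a + β := by linarith
  have key := convex_four Real.convexOn_log_Gamma (m := b + α) (x := a + α) (y := b + β)
    (M := a + β) h (by linarith) (by linarith) (by ring)
  simp only [Function.comp] at key
  have hlog : Real.log (Real.Gamma (a + α) * Real.Gamma (b + β)) ≤
      Real.log (Real.Gamma (b + α) * Real.Gamma (a + β)) := by
    rw [Real.log_mul (Real.Gamma_pos_of_pos haα).ne' (Real.Gamma_pos_of_pos hbβ).ne',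
      Real.log_mul (Real.Gamma_pos_of_pos h).ne' (Real.Gamma_pos_of_pos haβ).ne']
    linarith
  exact (Real.log_le_log_iff
    (mul_pos (Real.Gamma_pos_of_pos haα) (Real.Gamma_pos_of_pos hbβ))
    (mul_pos (Real.Gamma_pos_of_pos h) (Real.Gamma_pos_of_pos haβ))).mp hlog

/-- Monotonicity of the ratio of Gamma functions `g(α) = Γ(a+α)/Γ(b+α)`. -/
theorem gamma_ratio_monotone (a b : ℝ) :
    (a ≥ b → MonotoneOn (fun α : ℝ => Real.Gamma (a + α) / Real.Gamma (b + α))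
        {α : ℝ | 0 < b + α}) ∧
    (b ≥ a → AntitoneOn (fun α : ℝ => Real.Gamma (a + α) / Real.Gamma (b + α))
        {α : ℝ | 0 < a + α}) := by
  constructor
  · intro hab α hα β hβ hαβ
    simp only [Set.mem_setOf_eq] at hα hβ
    have hprod := gamma_prod_s7 a b α β hab hαβ hα
    rw [div_le_div_iff₀ (Real.Gamma_pos_of_pos hα) (Real.Gamma_pos_of_pos hβ)]
    linarith [hprod]
  · intro hab α hα β hβ hαβ
    simp only [Set.mem_setOf_eq] at hα hβ
    have hprod := gamma_prod_s7 b a α β hab hαβ hα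
    have hbα : 0 < b + α := by linarith
    have hbβ : 0 < b + β := by linarith
    rw [div_le_div_iff₀ (Real.Gamma_pos_of_pos hbβ) (Real.Gamma_pos_of_pos hbα)]
    linarith [hprod]
end

section
/- Let m ≥ 2 be an integer and let α be a real number with 0 < α < 1. Then (sin(πα)/π) · Γ(1+α) · Γ(m−α) / m! ≤ α·(1−α)·2^α / m^{1+α}. Moreover, for m = 1 one has (sin(πα)/π) · Γ(1+α) · Γ(1−α) = α. -/
open Real Finset


lemma term_le (α x : ℝ) (h0 : 0 < α) (h1 : α < 1) (hx : 1 ≤ x) :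
    (x - α) / x ≤ (x / (x + 1)) ^ α := by
  have hx0 : 0 < x := by linarith
  have hb : (1 + 1/x) ^ α ≤ 1 + α * (1/x) :=
    rpow_one_add_le_one_add_mul_self
      (by have := one_div_nonneg.mpr hx0.le; linarith) h0.le h1.le
  have hpos : (0:ℝ) < (1 + 1/x) ^ α := Real.rpow_pos_of_pos (by positivity) α
  have h2 : (x / (x+1)) ^ α * (1 + 1/x) ^ α = 1 := by
    rw [← Real.mul_rpow (by positivity) (by positivity)]
    have : x / (x+1) * (1 + 1/x) = 1 := by field_simp
    rw [this, Real.one_rpow]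
  have h3 : (x / (x+1)) ^ α = ((1 + 1/x) ^ α)⁻¹ :=
    eq_inv_of_mul_eq_one_left (by linarith [h2, mul_comm ((x/(x+1))^α) ((1+1/x)^α)])
  have hmul : (x - α)/x * (1 + 1/x) ^ α ≤ 1 := by
    have hnn : (0:ℝ) ≤ (x - α)/x := by
      apply div_nonneg _ hx0.le; linarith
    calc (x - α)/x * (1 + 1/x) ^ α ≤ (x - α)/x * (1 + α * (1/x)) :=
          mul_le_mul_of_nonneg_left hb hnn
      _ ≤ 1 := by
          rw [div_mul_eq_mul_div, div_le_one hx0]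
          have : (x - α) * (1 + α * (1/x)) = x - α + α - α^2/x := by field_simp; ring
          rw [this]
          have : α^2/x > 0 := by positivity
          linarith
  rw [h3, ← one_div, le_div_iff₀ hpos]
  exact hmul

lemma prod_bound (α : ℝ) (h0 : 0 < α) (h1 : α < 1) (n : ℕ) :
    ∏ k ∈ range n, (((k:ℝ) + 2 - α) / ((k:ℝ) + 2)) ≤ (2 / ((n:ℝ) + 2)) ^ α := by
  induction n with
  | zero => simp
  | succ n ih =>
    rw [prod_range_succ]
    push_cast
    have hterm : ((n:ℝ) + 2 - α) / ((n:ℝ) + 2) ≤ (((n:ℝ)+2) / ((n:ℝ)+3)) ^ α := by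
      have := term_le α ((n:ℝ)+2) h0 h1 (by linarith [Nat.cast_nonneg (α := ℝ) n])
      convert this using 3 <;> ring
    have hnn : (0:ℝ) ≤ ∏ k ∈ range n, (((k:ℝ) + 2 - α) / ((k:ℝ) + 2)) := by
      apply Finset.prod_nonneg
      intro k _
      have : (0:ℝ) ≤ (k:ℝ) := Nat.cast_nonneg k
      apply div_nonneg <;> linarith
    calc (∏ k ∈ range n, (((k:ℝ) + 2 - α) / ((k:ℝ) + 2))) * (((n:ℝ) + 2 - α) / ((n:ℝ) + 2))
        ≤ (2 / ((n:ℝ) + 2)) ^ α * ((((n:ℝ)+2) / ((n:ℝ)+3)) ^ α) := by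
          apply mul_le_mul ih hterm _ (by positivity)
          have : (0:ℝ) ≤ (n:ℝ) := Nat.cast_nonneg n
          apply div_nonneg <;> linarith
      _ = (2 / ((n:ℝ) + 1 + 2)) ^ α := by
          rw [← Real.mul_rpow (by positivity) (by positivity)]
          congr 1
          have h2 : ((n:ℝ)+2) ≠ 0 := by positivity
          have h3 : ((n:ℝ)+3) ≠ 0 := by positivity
          field_simp
          ring

lemma gamma_prod_s16 (α : ℝ) (h1 : α < 1) (n : ℕ) :
    Real.Gamma ((n:ℝ) + 1 - α) = (∏ k ∈ range n, ((k:ℝ) + 1 - α)) * Real.Gamma (1 - α) := by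
  induction n with
  | zero => simp
  | succ n ih =>
    have hne : (n:ℝ) + 1 - α ≠ 0 := by
      have : (0:ℝ) ≤ (n:ℝ) := Nat.cast_nonneg n
      exact ne_of_gt (by linarith)
    push_cast
    have heq : (n:ℝ) + 1 + 1 - α = ((n:ℝ) + 1 - α) + 1 := by ring
    rw [heq, Real.Gamma_add_one hne, prod_range_succ, ih]
    ring
theorem Phi_bound (m : ℕ) (hm : 2 ≤ m) (α : ℝ) (h0 : 0 < α) (h1 : α < 1) :
    Real.sin (Real.pi * α) / Real.pi * Real.Gamma (1 + α) * Real.Gamma ((m:ℝ) - α)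
        / (m.factorial : ℝ)
      ≤ α * (1 - α) * (2:ℝ) ^ α / (m:ℝ) ^ (1 + α) ∧
    Real.sin (Real.pi * α) / Real.pi * Real.Gamma (1 + α) * Real.Gamma (1 - α) = α := by
  have part2 : Real.sin (Real.pi * α) / Real.pi * Real.Gamma (1 + α) * Real.Gamma (1 - α) = α := by
    have hα : Real.Gamma α * Real.Gamma (1 - α) = π / Real.sin (π * α) :=
      Real.Gamma_mul_Gamma_one_sub α
    have h1a : Real.Gamma (1 + α) = α * Real.Gamma α := by
      rw [add_comm, Real.Gamma_add_one h0.ne']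
    have hsin : Real.sin (π * α) ≠ 0 := by
      apply ne_of_gt
      exact Real.sin_pos_of_pos_of_lt_pi (by positivity)
        (by nlinarith [Real.pi_pos])
    have key : Real.sin (π * α) * (Real.Gamma α * Real.Gamma (1 - α)) = π := by
      rw [hα]; field_simp
    field_simp [h1a]
    linear_combination α * key + Real.sin (π * α) * Real.Gamma (1 - α) * h1a
  refine ⟨?_, part2⟩
  obtain ⟨n, rfl⟩ : ∃ n, m = n + 2 := ⟨m - 2, by omega⟩
  have hn0 : (0:ℝ) ≤ (n:ℝ) := Nat.cast_nonneg n
  have hQpos : (0:ℝ) < ∏ k ∈ range n, ((k:ℝ) + 2) := Finset.prod_pos fun k _ => by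
    have : (0:ℝ) ≤ (k:ℝ) := Nat.cast_nonneg k; linarith
  have hPnn : (0:ℝ) ≤ ∏ k ∈ range n, ((k:ℝ) + 2 - α) := Finset.prod_nonneg fun k _ => by
    have : (0:ℝ) ≤ (k:ℝ) := Nat.cast_nonneg k; linarith
  have hG : Real.Gamma ((↑(n+2):ℝ) - α)
      = (∏ k ∈ range (n+1), ((k:ℝ) + 1 - α)) * Real.Gamma (1 - α) := by
    have h := gamma_prod_s16 α h1 (n+1)
    have heq : ((↑(n+2):ℝ)) - α = (↑(n+1):ℝ) + 1 - α := by push_cast; ring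
    rw [heq, h]
  have hsplit : ∏ k ∈ range (n+1), ((k:ℝ) + 1 - α)
      = (∏ k ∈ range n, ((k:ℝ) + 2 - α)) * (1 - α) := by
    have h2 : ∏ x ∈ range n, ((↑(x+1):ℝ) + 1 - α) = ∏ k ∈ range n, ((k:ℝ) + 2 - α) :=
      Finset.prod_congr rfl fun k _ => by push_cast; ring
    rw [prod_range_succ', h2]
    norm_num
  have hfactnat : (n+2).factorial = (n+2) * ∏ k ∈ range n, (k+2) := by
    have h1' : (∏ k ∈ range (n+1), (k + 1)) = (n+1).factorial :=
      Finset.prod_range_add_one_eq_factorial (n+1)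
    have h2' : (n+2).factorial = (n+2) * (n+1).factorial := rfl
    rw [h2', ← h1', prod_range_succ']
    simp
  have hfact : ((n+2).factorial : ℝ) = ((n:ℝ) + 2) * ∏ k ∈ range n, ((k:ℝ) + 2) := by
    rw [hfactnat]
    push_cast
    ring
  have hlhs : Real.sin (Real.pi * α) / Real.pi * Real.Gamma (1 + α) * Real.Gamma ((↑(n+2):ℝ) - α)
      / ((n+2).factorial : ℝ)
      = α * (1 - α) / ((n:ℝ) + 2)
        * ((∏ k ∈ range n, ((k:ℝ) + 2 - α)) / ∏ k ∈ range n, ((k:ℝ) + 2)) := by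
    rw [hG, hsplit, hfact]
    have key : Real.sin (Real.pi * α) / Real.pi * Real.Gamma (1 + α)
        * ((∏ k ∈ range n, ((k:ℝ) + 2 - α)) * (1 - α) * Real.Gamma (1 - α))
        = α * ((∏ k ∈ range n, ((k:ℝ) + 2 - α)) * (1 - α)) := by
      linear_combination (∏ k ∈ range n, ((k:ℝ) + 2 - α)) * (1 - α) * part2
    rw [key, div_mul_div_comm]
    rw [div_eq_div_iff (by positivity) (by positivity)]
    ring
  have hPQ : (∏ k ∈ range n, ((k:ℝ) + 2 - α)) / (∏ k ∈ range n, ((k:ℝ) + 2))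
      ≤ (2 / ((n:ℝ) + 2)) ^ α := by
    have h := prod_bound α h0 h1 n
    rwa [Finset.prod_div_distrib] at h
  have hrhs : α * (1 - α) * (2:ℝ) ^ α / (↑(n+2):ℝ) ^ (1 + α)
      = α * (1 - α) / ((n:ℝ) + 2) * ((2 / ((n:ℝ) + 2)) ^ α) := by
    have hx : (0:ℝ) < (n:ℝ) + 2 := by linarith
    rw [Real.div_rpow (by norm_num) hx.le]
    have heq : ((↑(n+2):ℝ)) ^ (1 + α) = ((n:ℝ) + 2) * ((n:ℝ) + 2) ^ α := by
      push_cast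
      rw [Real.rpow_add hx, Real.rpow_one]
    rw [heq]
    have h2 : (0:ℝ) < ((n:ℝ) + 2) ^ α := Real.rpow_pos_of_pos hx α
    field_simp
  rw [hlhs, hrhs]
  apply mul_le_mul_of_nonneg_left hPQ
  have : (0:ℝ) < 1 - α := by linarith
  positivity
end

section
/- For every integer n ≥ 4, Σ_{s=1}^{n} 2^s / s ≤ 2^{n+1}/n + 2^{n+1}/(n−3)², where the sum and all quantities are real numbers. -/
open Finset

lemma aux_frac_key (x : ℝ) (hx : 8 ≤ x) :
    1/x + 1/(x-3)^2 ≤ 1/(x+1) + 2/(x-2)^2 := by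
  have h1 : 0 < x := by linarith
  have h2 : 0 < x - 3 := by linarith
  have h3 : 0 < x + 1 := by linarith
  have h4 : 0 < x - 2 := by linarith
  rw [div_add_div _ _ (by positivity) (by positivity),
    div_add_div _ _ (by positivity) (by positivity),
    div_le_div_iff₀ (by positivity) (by positivity)]
  nlinarith [mul_pos h2 h2, mul_pos h4 h4, sq_nonneg (x-8),
    mul_nonneg (mul_nonneg (by linarith : (0:ℝ) ≤ x-8) h4.le) h4.le]

lemma aux_main (n : ℕ) (hn : 8 ≤ n) :
    ∑ s ∈ Finset.Icc 1 n, (2:ℝ) ^ s / (s:ℝ) ≤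
      2 ^ (n + 1) / (n:ℝ) + 2 ^ (n + 1) / ((n:ℝ) - 3) ^ 2 := by
  induction n, hn using Nat.le_induction with
  | base =>
    norm_num [show Finset.Icc 1 8 = {1,2,3,4,5,6,7,8} from rfl]
  | succ n hn ih =>
    rw [Finset.sum_Icc_succ_top (by omega : 1 ≤ n + 1)]
    have hx : (8:ℝ) ≤ (n:ℝ) := by exact_mod_cast hn
    set x := (n:ℝ) with hxdef
    have hcast1 : ((n+1:ℕ):ℝ) = x + 1 := by push_cast; ring
    have key := aux_frac_key x hx
    have hc : (0:ℝ) < 2^(n+1) := by positivity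
    have hmul := mul_le_mul_of_nonneg_left key hc.le
    simp only [mul_add, mul_one_div] at hmul
    have hstep : 2^(n+1)/x + 2^(n+1)/(x-3)^2 + 2^(n+1)/(x+1)
        ≤ 2^(n+1+1)/(x+1) + 2^(n+1+1)/((x+1)-3)^2 := by
      have h2 : (2:ℝ)^(n+1+1) = 2 * 2^(n+1) := by ring
      rw [h2]
      have e1 : (x+1) - 3 = x - 2 := by ring
      rw [e1]
      rw [show 2 * (2:ℝ)^(n+1)/(x+1) = 2^(n+1)/(x+1) + 2^(n+1)/(x+1) by ring,
        show 2 * (2:ℝ)^(n+1)/(x-2)^2 = 2 * (2^(n+1)/(x-2)^2) by ring]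
      have hre : (2:ℝ)^(n+1) * (2/(x-2)^2) = 2 * (2^(n+1)/(x-2)^2) := by ring
      rw [hre] at hmul
      linarith
    calc ∑ s ∈ Finset.Icc 1 n, (2:ℝ) ^ s / (s:ℝ) + 2^(n+1)/((n+1:ℕ):ℝ)
        ≤ (2^(n+1)/x + 2^(n+1)/(x-3)^2) + 2^(n+1)/(x+1) := by
          rw [hcast1]; linarith [ih]
      _ ≤ 2^(n+1+1)/(x+1) + 2^(n+1+1)/((x+1)-3)^2 := by linarith [hstep]
      _ = 2 ^ (n+1+1) / ((n+1:ℕ):ℝ) + 2 ^ (n+1+1) / (((n+1:ℕ):ℝ) - 3) ^ 2 := by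
          rw [hcast1]

theorem sum_two_pow_div_le (n : ℕ) (hn : 4 ≤ n) :
    ∑ s ∈ Finset.Icc 1 n, (2:ℝ) ^ s / (s:ℝ) ≤
      2 ^ (n + 1) / (n:ℝ) + 2 ^ (n + 1) / ((n:ℝ) - 3) ^ 2 := by
  by_cases h8 : 8 ≤ n
  · exact aux_main n h8
  · interval_cases n
    · norm_num [show Finset.Icc 1 4 = {1,2,3,4} from rfl]
    · norm_num [show Finset.Icc 1 5 = {1,2,3,4,5} from rfl]
    · norm_num [show Finset.Icc 1 6 = {1,2,3,4,5,6} from rfl]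
    · norm_num [show Finset.Icc 1 7 = {1,2,3,4,5,6,7} from rfl]
end

section
/- For every integer n ≥ 4, Σ_{s=2}^{n} binom(n, s) / (s − 1) ≤ (2^{n+1}/n) · (1 + 15/(n−3)), where binom(n, s) is the ordinary (natural number) binomial coefficient and the sum is taken in the real numbers. -/
open Finset

lemma sum_choose_aux_pt (c x : ℝ) (hc : 0 ≤ c) (hx : 2 ≤ x) :
    c / (x - 1) ≤ c / (x + 1) + 8 * (c / ((x + 1) * (x + 2))) := by
  have h1 : (0:ℝ) < x - 1 := by linarith
  rw [mul_div_assoc'] at *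
  rw [div_add_div _ _ (by positivity) (by positivity), div_le_div_iff₀ h1 (by positivity)]
  nlinarith [mul_nonneg hc (sub_nonneg.2 hx)]

lemma sum_choose_arith (N P : ℝ) (hN : 4 ≤ N) (hP : 0 < P) :
    P / (N + 1) + 8 * (2 * P) / ((N + 1) * (N + 2)) ≤ P / N * (1 + 15 / (N - 3)) := by
  have h0 : (0:ℝ) < N := by linarith
  have h1 : (0:ℝ) < N + 1 := by linarith
  have h2 : (0:ℝ) < N + 2 := by linarith
  have h3 : (0:ℝ) < N - 3 := by linarith
  rw [div_add_div _ _ (by positivity) (by positivity)]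
  have hr : P / N * (1 + 15 / (N - 3)) = P * (N + 12) / (N * (N - 3)) := by
    have h15 : 1 + 15 / (N - 3) = (N + 12) / (N - 3) := by
      rw [show N + 12 = (N - 3) + 15 by ring, add_div, div_self h3.ne']
    rw [h15, div_mul_div_comm]
  rw [hr, div_le_div_iff₀ (by positivity) (by positivity)]
  nlinarith [mul_nonneg (mul_nonneg hP.le h0.le) h0.le, mul_nonneg hP.le h0.le, hP.le,
    mul_nonneg (mul_nonneg (mul_nonneg hP.le h0.le) h0.le) h0.le]

theorem sum_choose_div_le (n : ℕ) (hn : 4 ≤ n) :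
    ∑ s ∈ Finset.Icc 2 n, (n.choose s : ℝ) / ((s:ℝ) - 1) ≤
      (2 ^ (n + 1) / (n:ℝ)) * (1 + 15 / ((n:ℝ) - 3)) := by
  have hn1 : (0:ℝ) < (n:ℝ) + 1 := by positivity
  have hn2 : (0:ℝ) < (n:ℝ) + 2 := by positivity
  -- pointwise bound
  have key : ∀ s ∈ Finset.Icc 2 n, (n.choose s : ℝ) / ((s:ℝ) - 1) ≤
      ((n+1).choose (s+1) : ℝ) / ((n:ℝ)+1)
        + 8 * (((n+2).choose (s+2) : ℝ) / (((n:ℝ)+1) * ((n:ℝ)+2))) := by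
    intro s hs
    obtain ⟨hs2, hsn⟩ := Finset.mem_Icc.mp hs
    have hx : (2:ℝ) ≤ (s:ℝ) := by exact_mod_cast hs2
    have hs1 : (0:ℝ) < (s:ℝ) + 1 := by linarith
    have hs2' : (0:ℝ) < (s:ℝ) + 2 := by linarith
    have e1 : ((n:ℝ)+1) * (n.choose s : ℝ) = ((n+1).choose (s+1) : ℝ) * ((s:ℝ)+1) := by
      exact_mod_cast congrArg (Nat.cast : ℕ → ℝ) (Nat.add_one_mul_choose_eq n s)
    have e2 : ((n:ℝ)+2) * ((n+1).choose (s+1) : ℝ) = ((n+2).choose (s+2) : ℝ) * ((s:ℝ)+2) := by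
      exact_mod_cast congrArg (Nat.cast : ℕ → ℝ) (Nat.add_one_mul_choose_eq (n+1) (s+1))
    have f1 : ((n+1).choose (s+1) : ℝ) / ((n:ℝ)+1) = (n.choose s : ℝ) / ((s:ℝ)+1) := by
      rw [div_eq_div_iff hn1.ne' hs1.ne']; linarith
    have f2 : ((n+2).choose (s+2) : ℝ) / (((n:ℝ)+1) * ((n:ℝ)+2))
        = (n.choose s : ℝ) / (((s:ℝ)+1) * ((s:ℝ)+2)) := by
      rw [div_eq_div_iff (by positivity : ((n:ℝ)+1)*((n:ℝ)+2) ≠ 0) (by positivity : ((s:ℝ)+1)*((s:ℝ)+2) ≠ 0)]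
      linear_combination (-((s:ℝ)+1)) * e2 - (((n:ℝ)+2)) * e1
    rw [f1, f2]
    exact sum_choose_aux_pt _ _ (by positivity) hx
  -- nat sum bounds
  have hA : ∑ s ∈ range (n+1), (n+1).choose (s+1) ≤ 2^(n+1) := by
    have h := Nat.sum_range_choose (n+1)
    rw [Finset.sum_range_succ'] at h
    omega
  have hB : ∑ s ∈ range (n+1), (n+2).choose (s+2) ≤ 2^(n+2) := by
    have h := Nat.sum_range_choose (n+2)
    rw [Finset.sum_range_succ', Finset.sum_range_succ'] at h
    have e : ∑ s ∈ range (n+1), (n+2).choose (s+1+1) = ∑ s ∈ range (n+1), (n+2).choose (s+2) := by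
      apply Finset.sum_congr rfl; intro s _; norm_num
    rw [e] at h
    omega
  have hsub : Finset.Icc 2 n ⊆ Finset.range (n+1) := by
    intro s hs
    simp only [Finset.mem_Icc, Finset.mem_range] at *
    omega
  have hA' : (∑ s ∈ Finset.Icc 2 n, ((n+1).choose (s+1) : ℝ)) ≤ 2^(n+1) := by
    have : ∑ s ∈ Finset.Icc 2 n, (n+1).choose (s+1) ≤ 2^(n+1) :=
      le_trans (Finset.sum_le_sum_of_subset hsub) hA
    exact_mod_cast this
  have hB' : (∑ s ∈ Finset.Icc 2 n, ((n+2).choose (s+2) : ℝ)) ≤ 2^(n+2) := by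
    have : ∑ s ∈ Finset.Icc 2 n, (n+2).choose (s+2) ≤ 2^(n+2) :=
      le_trans (Finset.sum_le_sum_of_subset hsub) hB
    exact_mod_cast this
  calc ∑ s ∈ Finset.Icc 2 n, (n.choose s : ℝ) / ((s:ℝ) - 1)
      ≤ ∑ s ∈ Finset.Icc 2 n, (((n+1).choose (s+1) : ℝ) / ((n:ℝ)+1)
          + 8 * (((n+2).choose (s+2) : ℝ) / (((n:ℝ)+1) * ((n:ℝ)+2)))) :=
        Finset.sum_le_sum key
    _ = (∑ s ∈ Finset.Icc 2 n, ((n+1).choose (s+1) : ℝ)) / ((n:ℝ)+1)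
          + 8 * ((∑ s ∈ Finset.Icc 2 n, ((n+2).choose (s+2) : ℝ)) / (((n:ℝ)+1) * ((n:ℝ)+2))) := by
        rw [Finset.sum_add_distrib, ← Finset.sum_div, ← Finset.mul_sum, ← Finset.sum_div]
    _ ≤ (2^(n+1) : ℝ) / ((n:ℝ)+1) + 8 * ((2^(n+2) : ℝ) / (((n:ℝ)+1) * ((n:ℝ)+2))) := by
        gcongr
    _ ≤ (2 ^ (n + 1) / (n:ℝ)) * (1 + 15 / ((n:ℝ) - 3)) := by
        have hN : (4:ℝ) ≤ (n:ℝ) := by exact_mod_cast hn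
        have hP : (0:ℝ) < (2:ℝ)^(n+1) := by positivity
        have := sum_choose_arith ((n:ℝ)) ((2:ℝ)^(n+1)) hN hP
        calc (2^(n+1) : ℝ) / ((n:ℝ)+1) + 8 * ((2^(n+2) : ℝ) / (((n:ℝ)+1) * ((n:ℝ)+2)))
            = (2:ℝ)^(n+1) / ((n:ℝ)+1) + 8 * (2 * (2:ℝ)^(n+1)) / (((n:ℝ)+1) * ((n:ℝ)+2)) := by
              ring
          _ ≤ (2:ℝ)^(n+1) / (n:ℝ) * (1 + 15 / ((n:ℝ) - 3)) := this
end
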